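/- In R = ℂ[[x,y]] (two variables), the ideal 𝔪² = (x², xy, y²) is T-full (indeed Δ(𝔪²) = 𝔪³ and T(𝔪³) = 𝔪²), but 𝔪² is not a Tjurina ideal: there is no f ∈ ℂ[[x,y]] with T(f) = (x², xy, y²). In particular, T-fullness is not a sufficient condition for being a Tjurina ideal. -/

import Mathlib

/-- The partial derivative `∂f/∂xⱼ` of a formal power series `f ∈ ℂ[[x₁,…,xₙ]]`,
defined coefficientwise. -/
noncomputable def pd {n : ℕ} (j : Fin n) (f : MvPowerSeries (Fin n) ℂ) :
    MvPowerSeries (Fin n) ℂ :=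
  fun d => ((d j + 1 : ℕ) : ℂ) * MvPowerSeries.coeff (R := ℂ) (d + Finsupp.single j 1) f

/-- The Tjurina ideal `T(f) = (f, ∂f/∂x₁, …, ∂f/∂xₙ)`. -/
noncomputable def Tj {n : ℕ} (f : MvPowerSeries (Fin n) ℂ) : Ideal (MvPowerSeries (Fin n) ℂ) :=
  Ideal.span ({f} ∪ Set.range fun j => pd j f)

/-- The set of antiderivatives `Δ(I) = {f : T(f) ⊆ I}`. -/
def Del {n : ℕ} (I : Ideal (MvPowerSeries (Fin n) ℂ)) : Set (MvPowerSeries (Fin n) ℂ) :=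
  {f | Tj f ≤ I}

/-- The Tjurina ideal of an arbitrary set of power series (for an ideal `J`, applied to its
carrier this computes `T(J) = T(g₁) + … + T(g_q)` for any system of generators). -/
noncomputable def Tset {n : ℕ} (A : Set (MvPowerSeries (Fin n) ℂ)) :
    Ideal (MvPowerSeries (Fin n) ℂ) :=
  Ideal.span (A ∪ {g | ∃ f ∈ A, ∃ j, g = pd j f})

/-- The maximal ideal `𝔪 = (x₁,…,xₙ)` of `ℂ[[x₁,…,xₙ]]`. -/
noncomputable def mm (n : ℕ) : Ideal (MvPowerSeries (Fin n) ℂ) :=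
  Ideal.span (Set.range (MvPowerSeries.X : Fin n → MvPowerSeries (Fin n) ℂ))

open MvPowerSeries Finsupp

abbrev PS := MvPowerSeries (Fin 2) ℂ

lemma coeff_pd (j : Fin 2) (f : PS) (d : Fin 2 →₀ ℕ) :
    MvPowerSeries.coeff (R := ℂ) d (pd j f) =
      ((d j + 1 : ℕ) : ℂ) * MvPowerSeries.coeff (R := ℂ) (d + Finsupp.single j 1) f := rfl

/-- the ideal of series with vanishing coefficients in degrees < k -/

noncomputable def II (k : ℕ) : Ideal PS where
  carrier := {f | ∀ d : Fin 2 →₀ ℕ, d 0 + d 1 < k → MvPowerSeries.coeff (R := ℂ) d f = 0}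
  add_mem' := by
    intro a b ha hb d hd
    rw [map_add, ha d hd, hb d hd, add_zero]
  zero_mem' := by intro d hd; simp
  smul_mem' := by
    intro c f hf d hd
    rw [smul_eq_mul, MvPowerSeries.coeff_mul]
    apply Finset.sum_eq_zero
    rintro ⟨u, v⟩ huv
    rw [Finset.HasAntidiagonal.mem_antidiagonal] at huv
    have : v 0 + v 1 < k := by
      have h0 : u 0 + v 0 = d 0 := by rw [← huv]; simp
      have h1 : u 1 + v 1 = d 1 := by rw [← huv]; simp
      omega
    rw [hf v this, mul_zero]

lemma mem_II {k : ℕ} {f : PS} :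
    f ∈ II k ↔ ∀ d : Fin 2 →₀ ℕ, d 0 + d 1 < k → MvPowerSeries.coeff (R := ℂ) d f = 0 := Iff.rfl

lemma fin2_decomp (d : Fin 2 →₀ ℕ) : d = single 0 (d 0) + single 1 (d 1) := by
  ext i
  fin_cases i <;> simp

lemma II_mul_le (a b : ℕ) : II a * II b ≤ II (a + b) := by
  rw [Ideal.mul_le]
  intro f hf g hg
  rw [mem_II]
  intro d hd
  rw [MvPowerSeries.coeff_mul]
  apply Finset.sum_eq_zero
  rintro ⟨u, v⟩ huv
  rw [Finset.HasAntidiagonal.mem_antidiagonal] at huv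
  have h0 : u 0 + v 0 = d 0 := by rw [← huv]; simp
  have h1 : u 1 + v 1 = d 1 := by rw [← huv]; simp
  by_cases h : u 0 + u 1 < a
  · rw [hf u h, zero_mul]
  · rw [hg v (by omega), mul_zero]

lemma X_mem_II1 (j : Fin 2) : (MvPowerSeries.X j : PS) ∈ II 1 := by
  rw [mem_II]
  intro d hd
  rw [MvPowerSeries.coeff_X, if_neg]
  intro h
  subst h
  fin_cases j <;> simp at hd

lemma mm_le_II1 : mm 2 ≤ II 1 := by
  rw [mm, Ideal.span_le]
  rintro _ ⟨j, rfl⟩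
  exact X_mem_II1 j

lemma pow_le_II (k : ℕ) : mm 2 ^ k ≤ II k := by
  induction k with
  | zero => intro f _; rw [mem_II]; intro d hd; omega
  | succ k ih =>
      calc mm 2 ^ (k+1) = mm 2 ^ k * mm 2 := by rw [pow_succ]
      _ ≤ II k * II 1 := Ideal.mul_mono ih mm_le_II1
      _ ≤ II (k + 1) := II_mul_le k 1

lemma coeff_X_mul (j : Fin 2) (g : PS) (d : Fin 2 →₀ ℕ) :
    MvPowerSeries.coeff (R := ℂ) d (MvPowerSeries.X j * g) =
      if 1 ≤ d j then MvPowerSeries.coeff (R := ℂ) (d - single j 1) g else 0 := by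
  rw [MvPowerSeries.X, MvPowerSeries.coeff_monomial_mul]
  by_cases h : (Finsupp.single j 1 : Fin 2 →₀ ℕ) ≤ d
  · rw [if_pos h, if_pos (Finsupp.single_le_iff.mp h), one_mul]
  · rw [if_neg h, if_neg (fun hh => h (Finsupp.single_le_iff.mpr hh))]

lemma II_succ_le (k : ℕ) : II (k + 1) ≤ mm 2 * II k := by
  intro f hf
  rw [mem_II] at hf
  set g0 : PS := fun d => MvPowerSeries.coeff (R := ℂ) (d + single 0 1) f with hg0
  set g1 : PS := fun d => if d 0 = 0 then MvPowerSeries.coeff (R := ℂ) (d + single 1 1) f else 0 with hg1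
  have hg0c : ∀ d, MvPowerSeries.coeff (R := ℂ) d g0 = MvPowerSeries.coeff (R := ℂ) (d + single 0 1) f := fun d => rfl
  have hg1c : ∀ d, MvPowerSeries.coeff (R := ℂ) d g1
      = if d 0 = 0 then MvPowerSeries.coeff (R := ℂ) (d + single 1 1) f else 0 := fun d => rfl
  have hg0m : g0 ∈ II k := by
    rw [mem_II]
    intro d hd
    rw [hg0c]
    apply hf
    simp; omega
  have hg1m : g1 ∈ II k := by
    rw [mem_II]
    intro d hd
    rw [hg1c]
    split
    · apply hf; simp; omega
    · rfl
  have key : f = MvPowerSeries.X 0 * g0 + MvPowerSeries.X 1 * g1 := by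
    apply MvPowerSeries.ext
    intro d
    rw [map_add, coeff_X_mul, coeff_X_mul]
    by_cases h0 : 1 ≤ d 0
    · rw [if_pos h0, hg0c]
      have he : d - single 0 1 + single 0 1 = d := by
        ext i; fin_cases i <;> simp [Finsupp.tsub_apply] <;> omega
      rw [he]
      by_cases h1 : 1 ≤ d 1
      · rw [if_pos h1, hg1c, if_neg (by simp [Finsupp.tsub_apply]; omega)]
        ring
      · rw [if_neg h1, add_zero]
    · rw [if_neg h0, zero_add]
      by_cases h1 : 1 ≤ d 1
      · rw [if_pos h1, hg1c, if_pos (by simp [Finsupp.tsub_apply]; omega)]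
        have he : d - single 1 1 + single 1 1 = d := by
          ext i; fin_cases i <;> simp [Finsupp.tsub_apply] <;> omega
        rw [he]
      · have hd0 : d = 0 := by ext i; fin_cases i <;> simp <;> omega
        rw [if_neg h1, hd0]
        exact hf 0 (by simp)
  rw [key]
  apply add_mem
  · exact Ideal.mul_mem_mul (Ideal.subset_span ⟨0, rfl⟩) hg0m
  · exact Ideal.mul_mem_mul (Ideal.subset_span ⟨1, rfl⟩) hg1m

lemma II_le_pow (k : ℕ) : II k ≤ mm 2 ^ k := by
  induction k with
  | zero => simp
  | succ k ih =>
      calc II (k+1) ≤ mm 2 * II k := II_succ_le k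
      _ ≤ mm 2 * mm 2 ^ k := Ideal.mul_mono le_rfl ih
      _ = mm 2 ^ (k+1) := by rw [← pow_succ']

lemma pow_eq_II (k : ℕ) : mm 2 ^ k = II k := le_antisymm (pow_le_II k) (II_le_pow k)

lemma II_mono {k l : ℕ} (h : k ≤ l) : II l ≤ II k := by
  intro f hf
  rw [mem_II] at *
  intro d hd
  exact hf d (by omega)

lemma pd_mem_II {k : ℕ} (j : Fin 2) {f : PS} (hf : f ∈ II (k+1)) : pd j f ∈ II k := by
  rw [mem_II] at *
  intro d hd
  rw [coeff_pd, hf _ (by fin_cases j <;> simp <;> omega), mul_zero]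

lemma Tj_le_iff {f : PS} {I : Ideal PS} : Tj f ≤ I ↔ f ∈ I ∧ ∀ j, pd j f ∈ I := by
  rw [Tj, Ideal.span_le]
  constructor
  · intro h
    exact ⟨h (Set.mem_union_left _ rfl), fun j => h (Set.mem_union_right _ ⟨j, rfl⟩)⟩
  · rintro ⟨h1, h2⟩ g hg
    rcases hg with hg | ⟨j, rfl⟩
    · rw [Set.mem_singleton_iff] at hg; subst hg; exact h1
    · exact h2 j

lemma sub_single_add {d : Fin 2 →₀ ℕ} {j : Fin 2} (h : 1 ≤ d j) :
    d - single j 1 + single j 1 = d := by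
  ext i
  fin_cases i <;> fin_cases j <;>
    simp only [Fin.mk_zero, Fin.mk_one, Finsupp.add_apply, Finsupp.tsub_apply,
      Finsupp.single_apply, Fin.isValue] at h ⊢ <;> simp <;> omega

lemma deg_sub_single {d : Fin 2 →₀ ℕ} {j : Fin 2} (h : 1 ≤ d j) :
    ((d - single j 1 : Fin 2 →₀ ℕ)) 0 + ((d - single j 1 : Fin 2 →₀ ℕ)) 1 + 1 = d 0 + d 1 := by
  fin_cases j <;>
    simp only [Fin.mk_zero, Fin.mk_one, Finsupp.tsub_apply, Finsupp.single_apply] at h ⊢ <;>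
    simp <;> omega

lemma mem_II_succ {k : ℕ} {f : PS} (h1 : f ∈ II 1) (h2 : ∀ j, pd j f ∈ II k) :
    f ∈ II (k+1) := by
  rw [mem_II]
  intro d hd
  by_cases hz : d 0 + d 1 = 0
  · exact h1 d (by omega)
  · have hj : ∃ j : Fin 2, 1 ≤ d j := by
      by_cases h : 1 ≤ d 0
      · exact ⟨0, h⟩
      · exact ⟨1, by omega⟩
    obtain ⟨j, hj⟩ := hj
    have hde := sub_single_add hj
    have hdeg' := deg_sub_single hj
    have h3 := (mem_II.mp (h2 j)) (d - single j 1) (by omega)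
    rw [coeff_pd, hde] at h3
    rcases mul_eq_zero.mp h3 with h4 | h4
    · exact absurd h4 (Nat.cast_ne_zero.mpr (by omega))
    · exact h4

lemma part1 : Del (mm 2 ^ 2) = ↑(mm 2 ^ 3) := by
  ext f
  simp only [Del, Set.mem_setOf_eq, SetLike.mem_coe, pow_eq_II, Tj_le_iff]
  constructor
  · rintro ⟨h1, h2⟩
    exact mem_II_succ (II_mono (by omega) h1) h2
  · intro h
    exact ⟨II_mono (by omega) h, fun j => pd_mem_II j h⟩

noncomputable def Mn (a b : ℕ) : Fin 2 →₀ ℕ := single 0 a + single 1 b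

lemma Mn_apply0 (a b : ℕ) : Mn a b 0 = a := by simp [Mn, Finsupp.single_apply]

lemma Mn_apply1 (a b : ℕ) : Mn a b 1 = b := by simp [Mn, Finsupp.single_apply]

lemma Mn_inj {a0 a1 b0 b1 : ℕ} : Mn a0 a1 = Mn b0 b1 ↔ (a0 = b0 ∧ a1 = b1) := by
  constructor
  · intro h
    constructor
    · have h0 := DFunLike.congr_fun h 0
      rwa [Mn_apply0, Mn_apply0] at h0
    · have h1 := DFunLike.congr_fun h 1
      rwa [Mn_apply1, Mn_apply1] at h1
  · rintro ⟨rfl, rfl⟩; rfl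

lemma Mn_eq_iff {d : Fin 2 →₀ ℕ} {a b : ℕ} : d = Mn a b ↔ (d 0 = a ∧ d 1 = b) := by
  constructor
  · rintro rfl; exact ⟨Mn_apply0 a b, Mn_apply1 a b⟩
  · rintro ⟨h0, h1⟩
    rw [fin2_decomp d, h0, h1]; rfl

lemma monomial_mem_II {k : ℕ} {e : Fin 2 →₀ ℕ} (h : k ≤ e 0 + e 1) (a : ℂ) :
    MvPowerSeries.monomial (R := ℂ) e a ∈ II k := by
  rw [mem_II]
  intro d hd
  rw [MvPowerSeries.coeff_monomial, if_neg]
  rintro rfl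
  omega

lemma pd_monomial {e : Fin 2 →₀ ℕ} {j : Fin 2} (h : 1 ≤ e j) (a : ℂ) :
    pd j (MvPowerSeries.monomial (R := ℂ) e a) =
      MvPowerSeries.monomial (R := ℂ) (e - single j 1) ((e j : ℕ) * a) := by
  apply MvPowerSeries.ext
  intro d
  rw [coeff_pd, MvPowerSeries.coeff_monomial, MvPowerSeries.coeff_monomial]
  by_cases hc : d + single j 1 = e
  · have hd : d = e - single j 1 := by
      rw [← hc]; ext i; simp [Finsupp.tsub_apply]
    have hdj : d j + 1 = e j := by
      rw [← hc]; simp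
    rw [if_pos hc, if_pos hd, hdj]
  · rw [if_neg hc, mul_zero, if_neg]
    intro hd
    apply hc
    rw [hd, sub_single_add h]

lemma Mn_sub0 (a b : ℕ) : Mn (a+1) b - single 0 1 = Mn a b := by
  ext i
  fin_cases i <;> simp [Mn, Finsupp.tsub_apply, Finsupp.single_apply]

lemma Mn_sub1 (a b : ℕ) : Mn a (b+1) - single 1 1 = Mn a b := by
  ext i
  fin_cases i <;> simp [Mn, Finsupp.tsub_apply, Finsupp.single_apply]

lemma pd0_Mn (a b : ℕ) (c : ℂ) :
    pd 0 (MvPowerSeries.monomial (R := ℂ) (Mn (a+1) b) c)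
      = MvPowerSeries.monomial (R := ℂ) (Mn a b) ((a+1 : ℕ) * c) := by
  rw [pd_monomial (by rw [Mn_apply0]; omega), Mn_apply0, Mn_sub0]

lemma pd1_Mn (a b : ℕ) (c : ℂ) :
    pd 1 (MvPowerSeries.monomial (R := ℂ) (Mn a (b+1)) c)
      = MvPowerSeries.monomial (R := ℂ) (Mn a b) ((b+1 : ℕ) * c) := by
  rw [pd_monomial (by rw [Mn_apply1]; omega), Mn_apply1, Mn_sub1]

lemma pd_mem_Tset {A : Set PS} {g : PS} (hg : g ∈ A) (j : Fin 2) : pd j g ∈ Tset A :=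
  Ideal.subset_span (Or.inr ⟨g, hg, j, rfl⟩)

lemma C_mul_mono (a : ℂ) (e : Fin 2 →₀ ℕ) (b : ℂ) :
    (MvPowerSeries.C (σ := Fin 2) (R := ℂ) a) * MvPowerSeries.monomial (R := ℂ) e b
      = MvPowerSeries.monomial (R := ℂ) e (a * b) := by
  rw [← MvPowerSeries.monomial_zero_eq_C_apply, MvPowerSeries.monomial_mul_monomial, zero_add]

lemma Mn_mem_m3 {a b : ℕ} (h : 3 ≤ a + b) (c : ℂ) :
    MvPowerSeries.monomial (R := ℂ) (Mn a b) c ∈ ((mm 2 ^ 3 : Ideal PS) : Set PS) := by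
  rw [SetLike.mem_coe, pow_eq_II]
  exact monomial_mem_II (by rw [Mn_apply0, Mn_apply1]; omega) c

lemma mono2_mem_Tset (a b : ℕ) (h : a + b = 2) (c : ℂ) :
    MvPowerSeries.monomial (R := ℂ) (Mn a b) c ∈ Tset ((mm 2 ^ 3 : Ideal PS) : Set PS) := by
  have key : ∀ g ∈ Tset ((mm 2 ^ 3 : Ideal PS) : Set PS), ∀ r : ℂ,
      MvPowerSeries.C (σ := Fin 2) (R := ℂ) r * g ∈ Tset ((mm 2 ^ 3 : Ideal PS) : Set PS) :=
    fun g hg r => Ideal.mul_mem_left _ _ hg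
  have ha : a ≤ 2 := by omega
  interval_cases a
  · -- a = 0, b = 2
    have hb : b = 2 := by omega
    subst hb
    have h1 := pd_mem_Tset (Mn_mem_m3 (a := 0) (b := 3) (by omega) 1) 1
    rw [pd1_Mn 0 2 1] at h1
    have h2 := key _ h1 (c/3)
    rw [C_mul_mono] at h2
    convert h2 using 2
    push_cast
    field_simp
  · -- a = 1, b = 1
    have hb : b = 1 := by omega
    subst hb
    have h1 := pd_mem_Tset (Mn_mem_m3 (a := 2) (b := 1) (by omega) 1) 0
    rw [pd0_Mn 1 1 1] at h1
    have h2 := key _ h1 (c/2)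
    rw [C_mul_mono] at h2
    convert h2 using 2
    push_cast
    field_simp
  · -- a = 2, b = 0
    have hb : b = 0 := by omega
    subst hb
    have h1 := pd_mem_Tset (Mn_mem_m3 (a := 3) (b := 0) (by omega) 1) 0
    rw [pd0_Mn 2 0 1] at h1
    have h2 := key _ h1 (c/3)
    rw [C_mul_mono] at h2
    convert h2 using 2
    push_cast
    field_simp

lemma part2 : Tset ((mm 2 ^ 3 : Ideal PS) : Set PS) = mm 2 ^ 2 := by
  apply le_antisymm
  · rw [Tset, Ideal.span_le]
    rintro g (hg | ⟨f, hf, j, rfl⟩)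
    · rw [SetLike.mem_coe] at hg ⊢
      rw [pow_eq_II] at hg ⊢
      exact II_mono (by omega) hg
    · rw [SetLike.mem_coe] at hf ⊢
      rw [pow_eq_II] at hf ⊢
      exact pd_mem_II j hf
  · intro f hf
    rw [pow_eq_II, mem_II] at hf
    set A := MvPowerSeries.coeff (R := ℂ) (Mn 2 0) f with hA
    set B := MvPowerSeries.coeff (R := ℂ) (Mn 1 1) f with hB
    set Cc := MvPowerSeries.coeff (R := ℂ) (Mn 0 2) f with hCc
    set q : PS := MvPowerSeries.monomial (R := ℂ) (Mn 2 0) A + MvPowerSeries.monomial (R := ℂ) (Mn 1 1) B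
      + MvPowerSeries.monomial (R := ℂ) (Mn 0 2) Cc with hqdef
    have hq : q ∈ Tset ((mm 2 ^ 3 : Ideal PS) : Set PS) :=
      add_mem (add_mem (mono2_mem_Tset 2 0 rfl A) (mono2_mem_Tset 1 1 rfl B))
        (mono2_mem_Tset 0 2 rfl Cc)
    have hfq : f - q ∈ II 3 := by
      rw [mem_II]
      intro d hd
      have hcq : MvPowerSeries.coeff (R := ℂ) d q =
          (if d = Mn 2 0 then A else 0) + (if d = Mn 1 1 then B else 0)
            + (if d = Mn 0 2 then Cc else 0) := by
        rw [hqdef, map_add, map_add, MvPowerSeries.coeff_monomial, MvPowerSeries.coeff_monomial,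
          MvPowerSeries.coeff_monomial]
      rw [map_sub, hcq]
      by_cases h20 : d = Mn 2 0
      · rw [if_pos h20, if_neg (by rw [h20]; intro hh; have := Mn_inj.mp hh; omega),
          if_neg (by rw [h20]; intro hh; have := Mn_inj.mp hh; omega), h20]
        ring
      · rw [if_neg h20]
        by_cases h11 : d = Mn 1 1
        · rw [if_pos h11, if_neg (by rw [h11]; intro hh; have := Mn_inj.mp hh; omega), h11]
          ring
        · rw [if_neg h11]
          by_cases h02 : d = Mn 0 2
          · rw [if_pos h02, h02]
            ring
          · rw [if_neg h02]
            have hdeg : d 0 + d 1 < 2 := by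
              by_contra hcon
              have h2 : d 0 + d 1 = 2 := by omega
              have : d 0 ≤ 2 := by omega
              interval_cases h : d 0
              · exact h02 (Mn_eq_iff.mpr ⟨h, by omega⟩)
              · exact h11 (Mn_eq_iff.mpr ⟨h, by omega⟩)
              · exact h20 (Mn_eq_iff.mpr ⟨h, by omega⟩)
            rw [hf d hdeg]
            ring
    have : f = (f - q) + q := by ring
    rw [this]
    exact add_mem (Ideal.subset_span (Or.inl (by rw [← pow_eq_II] at hfq; exact hfq))) hq

lemma key_coeff {p : PS} (hp : p ∈ II 2) (b : PS) {d : Fin 2 →₀ ℕ} (hd : d 0 + d 1 = 2) :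
    MvPowerSeries.coeff (R := ℂ) d (b * p)
      = MvPowerSeries.coeff (R := ℂ) 0 b * MvPowerSeries.coeff (R := ℂ) d p := by
  rw [MvPowerSeries.coeff_mul]
  apply Finset.sum_eq_single (0, d)
  · rintro ⟨u, v⟩ huv hne
    rw [Finset.HasAntidiagonal.mem_antidiagonal] at huv
    have hu : ¬(u 0 + u 1 = 0) := by
      intro h
      have hu0 : u = 0 := by ext i; fin_cases i <;> simp <;> omega
      apply hne
      have hv : v = d := by rw [hu0] at huv; simpa using huv
      rw [hu0, hv]
    have h0 : u 0 + v 0 = d 0 := by rw [← huv]; simp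
    have h1 : u 1 + v 1 = d 1 := by rw [← huv]; simp
    rw [mem_II.mp hp v (by omega), mul_zero]
  · intro h
    exact absurd (Finset.HasAntidiagonal.mem_antidiagonal.mpr (zero_add d)) h

lemma part3 : ¬ ∃ f : MvPowerSeries (Fin 2) ℂ, mm 2 ^ 2 = Tj f := by
  rintro ⟨f, hTj⟩
  have hfm : f ∈ II 2 := by
    rw [← pow_eq_II, hTj]
    exact Ideal.subset_span (Set.mem_union_left _ rfl)
  have hpd : ∀ j, pd j f ∈ II 2 := by
    intro j
    rw [← pow_eq_II, hTj]
    exact Ideal.subset_span (Set.mem_union_right _ ⟨j, rfl⟩)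
  have hf3 : f ∈ II 3 := mem_II_succ (II_mono (by omega) hfm) hpd
  set D : Fin 3 → (Fin 2 →₀ ℕ) := ![Mn 2 0, Mn 1 1, Mn 0 2] with hD
  have hdegD : ∀ k, D k 0 + D k 1 = 2 := by
    intro k
    fin_cases k <;> simp [hD, Mn_apply0, Mn_apply1]
  have hxm : ∀ i : Fin 3, MvPowerSeries.monomial (R := ℂ) (D i) 1 ∈ Tj f := by
    intro i
    rw [← hTj, pow_eq_II]
    exact monomial_mem_II (by have := hdegD i; omega) 1
  have hmem : ∀ i : Fin 3, ∃ a b c : PS,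
      MvPowerSeries.monomial (R := ℂ) (D i) 1 = a * f + (b * pd 0 f + c * pd 1 f) := by
    intro i
    have h1 := hxm i
    rw [Tj] at h1
    have hset : ({f} ∪ Set.range fun j => pd j f : Set PS) = insert f {pd 0 f, pd 1 f} := by
      ext g
      simp [Fin.exists_fin_two, or_assoc, eq_comm]
    rw [hset, Ideal.mem_span_insert] at h1
    obtain ⟨a, z, hz, hx⟩ := h1
    rw [Ideal.mem_span_insert] at hz
    obtain ⟨b, w, hw, hzz⟩ := hz
    rw [Ideal.mem_span_singleton'] at hw
    obtain ⟨c, hc⟩ := hw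
    exact ⟨a, b, c, by rw [hx, hzz, ← hc]⟩
  choose a b c hx using hmem
  set Bm : Matrix (Fin 3) (Fin 2) ℂ :=
    Matrix.of fun i j => MvPowerSeries.coeff (R := ℂ) 0 (![b i, c i] j) with hBm
  set Mm : Matrix (Fin 2) (Fin 3) ℂ :=
    Matrix.of fun j k => MvPowerSeries.coeff (R := ℂ) (D k) (pd j f) with hMm
  have hBM : Bm * Mm = 1 := by
    ext i k
    rw [Matrix.mul_apply, Fin.sum_univ_two]
    have hcoeff : MvPowerSeries.coeff (R := ℂ) (D k) (MvPowerSeries.monomial (R := ℂ) (D i) 1)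
        = MvPowerSeries.coeff (R := ℂ) 0 (b i) * MvPowerSeries.coeff (R := ℂ) (D k) (pd 0 f)
          + MvPowerSeries.coeff (R := ℂ) 0 (c i) * MvPowerSeries.coeff (R := ℂ) (D k) (pd 1 f) := by
      rw [hx i, map_add, map_add]
      have hzero : MvPowerSeries.coeff (R := ℂ) (D k) (a i * f) = 0 :=
        mem_II.mp (Ideal.mul_mem_left (II 3) (a i) hf3) (D k) (by have := hdegD k; omega)
      rw [hzero, zero_add, key_coeff (hpd 0) (b i) (hdegD k), key_coeff (hpd 1) (c i) (hdegD k)]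
    have : (Bm i 0) * (Mm 0 k) + (Bm i 1) * (Mm 1 k)
        = MvPowerSeries.coeff (R := ℂ) (D k) (MvPowerSeries.monomial (R := ℂ) (D i) 1) := by
      rw [hcoeff]; rfl
    rw [this, MvPowerSeries.coeff_monomial]
    by_cases hik : i = k
    · subst hik
      rw [if_pos rfl, Matrix.one_apply_eq]
    · have hne : ¬ (D k = D i) := by
        intro hDk
        apply hik
        fin_cases i <;> fin_cases k <;> simp [hD] at hDk ⊢ <;>
          (try rfl) <;> (exact absurd (Mn_inj.mp hDk) (by omega))
      rw [if_neg hne, Matrix.one_apply_ne hik]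
  have hrank : (3 : ℕ) ≤ 2 := by
    calc (3 : ℕ) = (1 : Matrix (Fin 3) (Fin 3) ℂ).rank := by
          rw [Matrix.rank_one, Fintype.card_fin]
      _ = (Bm * Mm).rank := by rw [hBM]
      _ ≤ Mm.rank := Matrix.rank_mul_le_right Bm Mm
      _ ≤ Fintype.card (Fin 2) := Matrix.rank_le_card_height Mm
      _ = 2 := Fintype.card_fin 2
  omega

/-- in `ℂ[[x,y]]`, `Δ(𝔪²) = 𝔪³`, `T(𝔪³) = 𝔪²` (so `𝔪²` is T-full),
yet `𝔪²` is not a Tjurina ideal. -/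
theorem stmt_16 :
    Del (mm 2 ^ 2) = ↑(mm 2 ^ 3) ∧
    Tset ↑(mm 2 ^ 3) = mm 2 ^ 2 ∧
    ¬ ∃ f : MvPowerSeries (Fin 2) ℂ, mm 2 ^ 2 = Tj f := by
  exact ⟨part1, part2, part3⟩
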